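/- Let $X$ be a symmetric $n\times n$ matrix. Then $e^X \preceq X + \exp(9X^2/16)$ and $e^X \preceq e^{\|X\|}\cdot I$ in the semidefinite (Loewner) order, where $e^X$, $\exp(9X^2/16)$ are matrix exponentials and $\|X\|$ is the spectral norm. -/

import Mathlib

open scoped RealInnerProductSpace

lemma stmt17_qpos {t : ℝ} (h0 : 0 ≤ t) (h1 : t ≤ 16/9) :
    0 ≤ 1/16 - t/6 + 179/1536*t^2 - 1/120*t^3 + 31261/1105920*t^4 - 11/55296*t^5
      + 293549/70778880*t^6 - 1/414720*t^7 - 53/265420800*t^8 - 7/530841600*t^9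
      - 49/76441190400*t^10 := by
  nlinarith [sq_nonneg (t - 128/179), sq_nonneg (t^2 - t), sq_nonneg (t^3 - t^2),
    sq_nonneg (t^4-t^3), sq_nonneg (t^5-t^4), mul_nonneg h0 (sub_nonneg.2 h1),
    pow_nonneg h0 6, pow_nonneg h0 8, pow_nonneg h0 10,
    mul_nonneg (mul_nonneg h0 h0) (sub_nonneg.2 h1), sq_nonneg (t-1)]

lemma stmt17_scalar_key (t : ℝ) : Real.exp t ≤ t + Real.exp (9/16 * t^2) := by
  rcases le_or_gt t 0 with ht | ht
  · have hs : (0:ℝ) ≤ -t := by linarith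
    have h1 := Real.sum_le_exp_of_nonneg hs 3
    norm_num [Finset.sum_range_succ, Nat.factorial] at h1
    have h2 : Real.exp t * Real.exp (-t) = 1 := by rw [← Real.exp_add]; simp
    have hA : (0:ℝ) < 1 + -t + t^2/2 := by nlinarith [sq_nonneg (t-1)]
    have e1 : Real.exp t * (1 + -t + t^2/2) ≤ 1 := by
      calc Real.exp t * (1 + -t + t^2/2) ≤ Real.exp t * Real.exp (-t) :=
            mul_le_mul_of_nonneg_left (by linarith) (Real.exp_pos t).le
        _ = 1 := h2
    have e2 : (1:ℝ) ≤ (1+t+t^2/2) * (1 + -t + t^2/2) := by nlinarith [sq_nonneg (t^2)]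
    have h3 : Real.exp t ≤ 1+t+t^2/2 := (mul_le_mul_iff_left₀ hA).mp (e1.trans e2)
    have h4 : (1:ℝ) + 9/16*t^2 ≤ Real.exp (9/16*t^2) := by
      have := Real.add_one_le_exp (9/16*t^2); linarith
    nlinarith [sq_nonneg t]
  · rcases le_or_gt (16/9 : ℝ) t with h169 | h169
    · have h5 : t ≤ 9/16*t^2 := by nlinarith
      have := Real.exp_le_exp.2 h5
      linarith [ht.le]
    · have hy0 : (0:ℝ) ≤ t/2 := by linarith
      have hy1 : t/2 ≤ 1 := by linarith
      have hU := Real.exp_bound' hy0 hy1 (n := 6) (by norm_num)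
      have hL := Real.sum_le_exp_of_nonneg (by positivity : (0:ℝ) ≤ 9/16*t^2) 5
      have hsplit : Real.exp t = Real.exp (t/2) * Real.exp (t/2) := by
        rw [← Real.exp_add]; ring_nf
      have hS : Real.exp (t/2) ≤ 1 + t/2 + t^2/8 + t^3/48 + t^4/384 + t^5/3840
          + 7*t^6/276480 := by
        norm_num [Finset.sum_range_succ, Nat.factorial] at hU
        nlinarith [hU]
      have hq := stmt17_qpos ht.le h169.le
      have hE := Real.exp_pos (t/2)
      rw [hsplit]
      have hL' : 1 + (9/16*t^2) + (9/16*t^2)^2/2 + (9/16*t^2)^3/6 + (9/16*t^2)^4/24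
          ≤ Real.exp (9/16*t^2) := by
        norm_num [Finset.sum_range_succ, Nat.factorial] at hL
        nlinarith [hL]
      nlinarith [mul_le_mul hS hS hE.le (by nlinarith :
          (0:ℝ) ≤ 1 + t/2 + t^2/8 + t^3/48 + t^4/384 + t^5/3840 + 7*t^6/276480),
        mul_nonneg (sq_nonneg t) hq]

lemma stmt17_exp_apply_eigen {E : Type*} [NormedAddCommGroup E] [InnerProductSpace ℝ E]
    [CompleteSpace E] (A : E →L[ℝ] E) (u : E) (c : ℝ) (h : A u = c • u) :
    NormedSpace.exp A u = Real.exp c • u := by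
  have hpow : ∀ k : ℕ, (A ^ k) u = c ^ k • u := by
    intro k
    induction k with
    | zero => simp
    | succ k ih =>
      rw [pow_succ, ContinuousLinearMap.mul_apply, h, map_smul, ih, smul_smul, pow_succ]
      ring_nf
  have hsum : Summable fun k : ℕ => ((k.factorial : ℝ))⁻¹ • A ^ k :=
    NormedSpace.expSeries_summable' A
  have h1 : NormedSpace.exp A u = ∑' k : ℕ, (((k.factorial : ℝ))⁻¹ • A ^ k) u := by
    rw [NormedSpace.exp_eq_tsum ℝ]
    exact (ContinuousLinearMap.apply ℝ E u).map_tsum hsum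
  rw [h1]
  have h2 : ∀ k : ℕ, (((k.factorial : ℝ))⁻¹ • A ^ k) u = (c ^ k / (k.factorial : ℝ)) • u := by
    intro k
    rw [ContinuousLinearMap.smul_apply, hpow k, smul_smul]
    congr 1
    field_simp
  rw [tsum_congr h2, Summable.tsum_smul_const (Real.summable_pow_div_factorial c)]
  congr 1
  rw [Real.exp_eq_exp_ℝ, NormedSpace.exp_eq_tsum_div]

lemma stmt17_inner_eigen_sum {ι : Type*} [Fintype ι] {E : Type*} [NormedAddCommGroup E]
    [InnerProductSpace ℝ E] (b : OrthonormalBasis ι ℝ E) (A : E →L[ℝ] E) (a : ι → ℝ)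
    (hA : ∀ i, A (b i) = a i • b i) (u : E) :
    ⟪u, A u⟫ = ∑ i, a i * ⟪b i, u⟫ ^ 2 := by
  have h1 : A u = ∑ i, (⟪b i, u⟫ * a i) • b i := by
    conv_lhs => rw [← b.sum_repr' u]
    rw [map_sum]
    simp_rw [map_smul, hA, smul_smul]
  rw [h1, inner_sum]
  simp_rw [real_inner_smul_right]
  refine Finset.sum_congr rfl fun i _ => ?_
  rw [real_inner_comm u (b i)]; ring

/-- for a symmetric operator `X` on `ℝ^n`,
`e^X ⪯ X + exp(9X²/16)` and `e^X ⪯ e^{‖X‖} · I` in the Loewner order (the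
Loewner order `A ⪯ B` is expressed via `⟪u, A u⟫ ≤ ⟪u, B u⟫` for all `u`),
with `‖X‖` the operator (spectral) norm. -/
theorem stmt17 (n : ℕ)
    (X : EuclideanSpace ℝ (Fin n) →L[ℝ] EuclideanSpace ℝ (Fin n))
    (hX : ∀ u v, ⟪X u, v⟫ = ⟪u, X v⟫) :
    (∀ u, ⟪u, NormedSpace.exp X u⟫ ≤
        ⟪u, (X + NormedSpace.exp (((9 : ℝ) / 16) • (X * X))) u⟫) ∧
    (∀ u, ⟪u, NormedSpace.exp X u⟫ ≤ Real.exp ‖X‖ * ‖u‖ ^ 2) := by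
  have hsym : LinearMap.IsSymmetric
      (↑X : EuclideanSpace ℝ (Fin n) →ₗ[ℝ] EuclideanSpace ℝ (Fin n)) := fun u v => hX u v
  have hn : Module.finrank ℝ (EuclideanSpace ℝ (Fin n)) = n := finrank_euclideanSpace_fin
  set b := hsym.eigenvectorBasis hn with hbdef
  set μ := hsym.eigenvalues hn with hμdef
  have hb : ∀ i, X (b i) = μ i • b i := by
    intro i
    exact hsym.apply_eigenvectorBasis hn i
  have hb2 : ∀ i, (((9:ℝ)/16) • (X * X)) (b i) = (9/16 * (μ i)^2) • b i := by
    intro i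
    rw [ContinuousLinearMap.smul_apply, ContinuousLinearMap.mul_apply, hb, map_smul, hb,
      smul_smul, smul_smul]
    congr 1; ring
  have hexpX : ∀ i, NormedSpace.exp X (b i) = Real.exp (μ i) • b i :=
    fun i => stmt17_exp_apply_eigen X (b i) (μ i) (hb i)
  have hexpQ : ∀ i, NormedSpace.exp (((9:ℝ)/16) • (X * X)) (b i)
      = Real.exp (9/16 * (μ i)^2) • b i :=
    fun i => stmt17_exp_apply_eigen _ (b i) _ (hb2 i)
  have hnorm2 : ∀ u : EuclideanSpace ℝ (Fin n), ∑ i, ⟪b i, u⟫ ^ 2 = ‖u‖ ^ 2 := by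
    intro u
    have h := stmt17_inner_eigen_sum b (ContinuousLinearMap.id ℝ _) (fun _ => (1:ℝ))
      (fun i => (one_smul ℝ _).symm) u
    simp only [ContinuousLinearMap.id_apply, one_mul] at h
    rw [← h, real_inner_self_eq_norm_sq]
  have hμle : ∀ i, μ i ≤ ‖X‖ := by
    intro i
    have h1 : ‖X (b i)‖ ≤ ‖X‖ * ‖b i‖ := X.le_opNorm _
    have h2 : ‖b i‖ = 1 := b.orthonormal.1 i
    rw [hb i, norm_smul, h2, mul_one, mul_one, Real.norm_eq_abs] at h1
    linarith [le_abs_self (μ i)]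
  constructor
  · intro u
    rw [stmt17_inner_eigen_sum b _ _ hexpX u]
    have hadd : ⟪u, (X + NormedSpace.exp (((9:ℝ)/16) • (X * X))) u⟫
        = ∑ i, (μ i + Real.exp (9/16 * (μ i)^2)) * ⟪b i, u⟫ ^ 2 := by
      apply stmt17_inner_eigen_sum
      intro i
      rw [ContinuousLinearMap.add_apply, hb i, hexpQ i, ← add_smul]
    rw [hadd]
    apply Finset.sum_le_sum
    intro i _
    have := stmt17_scalar_key (μ i)
    nlinarith [sq_nonneg (⟪b i, u⟫)]
  · intro u
    rw [stmt17_inner_eigen_sum b _ _ hexpX u, ← hnorm2 u, Finset.mul_sum]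
    apply Finset.sum_le_sum
    intro i _
    have h1 : Real.exp (μ i) ≤ Real.exp ‖X‖ := Real.exp_le_exp.2 (hμle i)
    nlinarith [sq_nonneg (⟪b i, u⟫)]
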